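/- Let w_1 ≥ w_2 ≥ w_3 ≥ w_4 be real numbers, let p(x) = ∏_{k=1}^{4} (x - w_k), and let P be any real-polynomial antiderivative of p. Then there exists a real number c such that P(x) - c has all of its complex roots real if and only if P(w_4) ≥ P(w_1). -/

import Mathlib

open Polynomial

/-- A real polynomial is hyperbolic if all of its complex roots are real. -/
def Hyperbolic (p : Polynomial ℝ) : Prop :=
  ∀ z ∈ (p.map (algebraMap ℝ ℂ)).roots, z.im = 0

namespace Hyp

lemma splits_of_hyperbolic {Q : ℝ[X]} (hQ0 : Q ≠ 0) (h : Hyperbolic Q) :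
    Q.Splits := by
  refine Splits.of_splits_map (algebraMap ℝ ℂ) (IsAlgClosed.splits _) ?_
  intro a ha
  exact ⟨a.re, Complex.ext (by simp) (by simp [h a ha])⟩

lemma hyperbolic_of_splits {Q : ℝ[X]} (h : Q.Splits) : Hyperbolic Q := by
  intro z hz
  rw [h.roots_map] at hz
  obtain ⟨x, _, rfl⟩ := Multiset.mem_map.1 hz
  simp


-- degree facts
lemma natDegree_of_deriv {Q p : ℝ[X]} (hd : derivative Q = p)
    (hp4 : p.natDegree = 4) (hp0 : p ≠ 0) : Q.natDegree = 5 := by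
  have h0 : 0 < Q.natDegree := by
    rcases Nat.eq_zero_or_pos Q.natDegree with h | h
    · exact absurd (show p = 0 by rw [← hd]; exact derivative_of_natDegree_zero h) hp0
    · exact h
  have hdeg := degree_derivative_eq Q h0
  rw [hd, degree_eq_natDegree hp0, hp4] at hdeg
  have : (4 : ℕ) = Q.natDegree - 1 := by exact_mod_cast hdeg
  omega

lemma leadingCoeff_of_deriv {Q p : ℝ[X]} (hd : derivative Q = p)
    (hp4 : p.natDegree = 4) (hpm : p.Monic) (hQ5 : Q.natDegree = 5) :
    Q.leadingCoeff = 1/5 := by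
  have h4 : p.coeff 4 = 1 := by
    have := hpm.coeff_natDegree
    rwa [hp4] at this
  have h5 : p.coeff 4 = Q.coeff 5 * 5 := by
    rw [← hd, coeff_derivative]
    norm_num
  have : Q.coeff 5 = 1/5 := by rw [h4] at h5; linarith
  rw [leadingCoeff, hQ5, this]

-- monotonicity helpers
lemma strictMonoOn_Icc {Q : ℝ[X]} {a b : ℝ}
    (h : ∀ x ∈ Set.Ioo a b, 0 < (derivative Q).eval x) :
    StrictMonoOn (fun x => Q.eval x) (Set.Icc a b) := by
  apply strictMonoOn_of_deriv_pos (convex_Icc a b) Q.continuousOn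
  intro x hx
  rw [interior_Icc] at hx
  rw [Polynomial.deriv]
  exact h x hx

lemma strictAntiOn_Icc {Q : ℝ[X]} {a b : ℝ}
    (h : ∀ x ∈ Set.Ioo a b, (derivative Q).eval x < 0) :
    StrictAntiOn (fun x => Q.eval x) (Set.Icc a b) := by
  apply strictAntiOn_of_deriv_neg (convex_Icc a b) Q.continuousOn
  intro x hx
  rw [interior_Icc] at hx
  rw [Polynomial.deriv]
  exact h x hx

lemma monotoneOn_Icc {Q : ℝ[X]} {a b : ℝ}
    (h : ∀ x ∈ Set.Ioo a b, 0 ≤ (derivative Q).eval x) :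
    MonotoneOn (fun x => Q.eval x) (Set.Icc a b) := by
  apply monotoneOn_of_deriv_nonneg (convex_Icc a b) Q.continuousOn
  · intro x hx
    exact Q.differentiableOn x hx
  · intro x hx
    rw [interior_Icc] at hx
    rw [Polynomial.deriv]
    exact h x hx

lemma antitoneOn_Icc {Q : ℝ[X]} {a b : ℝ}
    (h : ∀ x ∈ Set.Ioo a b, (derivative Q).eval x ≤ 0) :
    AntitoneOn (fun x => Q.eval x) (Set.Icc a b) := by
  apply antitoneOn_of_deriv_nonpos (convex_Icc a b) Q.continuousOn
  · intro x hx
    exact Q.differentiableOn x hx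
  · intro x hx
    rw [interior_Icc] at hx
    rw [Polynomial.deriv]
    exact h x hx

-- IVT helpers
lemma exists_root_Icc {Q : ℝ[X]} {a b : ℝ} (hab : a ≤ b)
    (ha : Q.eval a ≤ 0) (hb : 0 ≤ Q.eval b) :
    ∃ x ∈ Set.Icc a b, Q.eval x = 0 := by
  have := intermediate_value_Icc hab (Q.continuousOn (s := Set.Icc a b))
  obtain ⟨x, hx, hx0⟩ := this ⟨ha, hb⟩
  exact ⟨x, hx, hx0⟩

lemma exists_root_Icc' {Q : ℝ[X]} {a b : ℝ} (hab : a ≤ b)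
    (ha : 0 ≤ Q.eval a) (hb : Q.eval b ≤ 0) :
    ∃ x ∈ Set.Icc a b, Q.eval x = 0 := by
  have := intermediate_value_Icc' hab (Q.continuousOn (s := Set.Icc a b))
  obtain ⟨x, hx, hx0⟩ := this ⟨hb, ha⟩
  exact ⟨x, hx, hx0⟩

-- unbounded behavior
lemma exists_eval_pos_gt {Q : ℝ[X]} (hdeg : 0 < Q.degree) (hlc : 0 < Q.leadingCoeff) (a : ℝ) :
    ∃ z, a < z ∧ 0 < Q.eval z := by
  have ht := Polynomial.tendsto_atTop_of_leadingCoeff_nonneg Q hdeg hlc.le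
  have h1 : ∀ᶠ x in Filter.atTop, 0 < Q.eval x := ht.eventually (Filter.eventually_gt_atTop 0)
  have h2 : ∀ᶠ (x : ℝ) in Filter.atTop, a < x := Filter.eventually_gt_atTop a
  obtain ⟨z, hz1, hz2⟩ := (h2.and h1).exists
  exact ⟨z, hz1, hz2⟩

lemma exists_eval_neg_lt {Q : ℝ[X]} (hdeg : Q.natDegree = 5) (hlc : 0 < Q.leadingCoeff) (a : ℝ) :
    ∃ z, z < a ∧ Q.eval z < 0 := by
  set R : ℝ[X] := Q.comp (-X) with hR
  have hndR : R.natDegree = 5 := by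
    rw [hR, natDegree_comp, hdeg]
    simp [natDegree_neg]
  have hlcR : R.leadingCoeff < 0 := by
    have hx : natDegree (-X : ℝ[X]) ≠ 0 := by simp [natDegree_neg]
    rw [hR, leadingCoeff_comp hx]
    have : leadingCoeff (-X : ℝ[X]) = -1 := by simp [leadingCoeff]
    rw [this, hdeg]
    norm_num
    exact hlc
  have hdegR : 0 < R.degree := by
    rw [degree_eq_natDegree (fun h => by simp [h] at hndR), hndR]
    exact_mod_cast Nat.zero_lt_succ 4
  have ht := Polynomial.tendsto_atBot_of_leadingCoeff_nonpos R hdegR hlcR.le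
  have h1 : ∀ᶠ x in Filter.atTop, R.eval x < 0 := ht.eventually (Filter.eventually_lt_atBot 0)
  have h2 : ∀ᶠ (x : ℝ) in Filter.atTop, -a < x := Filter.eventually_gt_atTop (-a)
  obtain ⟨z, hz1, hz2⟩ := (h2.and h1).exists
  refine ⟨-z, by linarith, ?_⟩
  have : R.eval z = Q.eval (-z) := by
    rw [hR, eval_comp]
    simp
  linarith [this ▸ hz2]

-- root counting helpers
lemma card_roots_ge (Q : ℝ[X]) (F : Finset ℝ) (n : ℝ → ℕ)
    (h : ∀ x ∈ F, n x ≤ Q.roots.count x) :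
    ∑ x ∈ F, n x ≤ Multiset.card Q.roots := by
  classical
  calc ∑ x ∈ F, n x ≤ ∑ x ∈ F, Q.roots.count x := Finset.sum_le_sum h
    _ = ∑ x ∈ F ∩ Q.roots.toFinset, Q.roots.count x := by
        apply (Finset.sum_subset (Finset.inter_subset_left) ?_).symm
        intro x hx hx'
        apply Multiset.count_eq_zero_of_notMem
        intro hm
        exact hx' (Finset.mem_inter.2 ⟨hx, Multiset.mem_toFinset.2 hm⟩)
    _ ≤ ∑ x ∈ Q.roots.toFinset, Q.roots.count x := by
        apply Finset.sum_le_sum_of_subset Finset.inter_subset_right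
    _ = Multiset.card Q.roots := Multiset.toFinset_sum_count_eq _

lemma count_ge_one {Q : ℝ[X]} (hQ0 : Q ≠ 0) {x : ℝ} (hx : Q.eval x = 0) :
    1 ≤ Q.roots.count x := by
  rw [count_roots]
  exact (rootMultiplicity_pos hQ0).2 hx

lemma count_ge_of_critical {Q : ℝ[X]} (hQ0 : Q ≠ 0) (hd0 : derivative Q ≠ 0) {x : ℝ}
    (hx : Q.eval x = 0) {m : ℕ} (hdvd : (X - C x) ^ m ∣ derivative Q) :
    m + 1 ≤ Q.roots.count x := by
  rw [count_roots]
  have h1 : 1 ≤ rootMultiplicity x Q := (rootMultiplicity_pos hQ0).2 hx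
  have h2 : m ≤ rootMultiplicity x (derivative Q) := (le_rootMultiplicity_iff hd0).2 hdvd
  have h3 := derivative_rootMultiplicity_of_root (p := Q) (t := x) hx
  omega


lemma multiset_prod_pos (s : Multiset ℝ) (h : ∀ x ∈ s, 0 < x) : 0 < s.prod := by
  induction s using Multiset.induction with
  | empty => simp
  | cons a t ih =>
    rw [Multiset.prod_cons]
    exact mul_pos (h a (Multiset.mem_cons_self a t))
      (ih fun x hx => h x (Multiset.mem_cons_of_mem hx))

lemma multiset_sum_pos (s : Multiset ℝ) (h : ∀ x ∈ s, 0 < x) (hs : s ≠ 0) : 0 < s.sum := by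
  obtain ⟨a, ha⟩ := Multiset.exists_mem_of_ne_zero hs
  obtain ⟨t, rfl⟩ := Multiset.exists_cons_of_mem ha
  rw [Multiset.sum_cons]
  have h0 : (0:ℝ) ≤ t.sum :=
    Multiset.sum_nonneg (fun x hx => (h x (Multiset.mem_cons_of_mem hx)).le)
  linarith [h a (Multiset.mem_cons_self _ _)]

lemma multiset_prod_pos_of_neg (s : Multiset ℝ) (h : ∀ x ∈ s, x < 0)
    (he : Even (Multiset.card s)) : 0 < s.prod := by
  have h1 : (s.map Neg.neg).prod = (-1 : ℝ) ^ (Multiset.card s) * s.prod := by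
    simpa using Multiset.prod_map_neg s
  have h2 : 0 < (s.map Neg.neg).prod := by
    apply multiset_prod_pos
    intro x hx
    obtain ⟨y, hy, rfl⟩ := Multiset.mem_map.1 hx
    linarith [h y hy]
  rw [h1, he.neg_one_pow, one_mul] at h2
  exact h2

lemma double_root_deriv_eval {Q : ℝ[X]} {s : ℝ} (h : (X - C s)^2 ∣ Q) :
    (derivative Q).eval s = 0 := by
  obtain ⟨R, rfl⟩ := h
  simp [derivative_mul, derivative_pow, eval_mul, eval_pow]

lemma sq_dvd_of_count {Q : ℝ[X]} (hfac : Q = C Q.leadingCoeff * (Q.roots.map (fun r => X - C r)).prod)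
    {s : ℝ} (h2 : 2 ≤ Q.roots.count s) : (X - C s)^2 ∣ Q := by
  classical
  have hle : Multiset.replicate 2 s ≤ Q.roots := by
    rw [Multiset.le_iff_count]
    intro a
    by_cases ha : a = s
    · subst ha; simpa [Multiset.count_replicate] using h2
    · simp [Multiset.count_replicate, ha]
  have hdvd := Multiset.prod_dvd_prod_of_le (Multiset.map_le_map (f := fun r => X - C r) hle)
  rw [Multiset.map_replicate, Multiset.prod_replicate] at hdvd
  exact hdvd.trans ⟨C Q.leadingCoeff, by nth_rewrite 1 [hfac]; ring⟩

lemma exists_deriv_root_between {Q : ℝ[X]} {a b : ℝ} (hab : a < b)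
    (ha : Q.eval a = 0) (hb : Q.eval b = 0) :
    ∃ t ∈ Set.Ioo a b, (derivative Q).eval t = 0 := by
  obtain ⟨t, ht, ht'⟩ := exists_hasDerivAt_eq_zero hab Q.continuousOn (ha.trans hb.symm)
    (fun x _ => Q.hasDerivAt x)
  exact ⟨t, ht, ht'⟩

lemma eval_le_zero_of_max {Q : ℝ[X]} (hQ0 : Q ≠ 0) (hsp : Q.Splits)
    (hlc : 0 < Q.leadingCoeff) (hQ5 : Q.natDegree = 5)
    {v : Fin 4 → ℝ} (hder : derivative Q = ∏ j, (X - C (v j)))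
    {W : ℝ} (hW : ∀ j, v j ≤ W) (j₀ : Fin 4) (hj₀ : v j₀ = W) :
    Q.eval W ≤ 0 := by
  classical
  have hfac := hsp.eq_prod_roots
  have hcard : Multiset.card Q.roots = 5 := by
    rw [splits_iff_card_roots.1 hsp, hQ5]
  have hmem : ∀ x ∈ Q.roots, Q.eval x = 0 := fun x hx => (mem_roots'.1 hx).2
  have hdpos : ∀ t, W < t → 0 < (derivative Q).eval t := by
    intro t ht
    rw [hder, eval_prod]
    apply Finset.prod_pos
    intro j _
    simp only [eval_sub, eval_X, eval_C]
    have := hW j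
    linarith
  have hWd0 : (derivative Q).eval W = 0 := by
    rw [hder, eval_prod]
    apply Finset.prod_eq_zero (Finset.mem_univ j₀)
    simp [hj₀]
  have hevalW : Q.eval W = Q.leadingCoeff * (Q.roots.map (fun r => W - r)).prod := by
    conv_lhs => rw [hfac]
    rw [eval_mul, eval_C, eval_multiset_prod, Multiset.map_map]
    congr 2
    apply Multiset.map_congr rfl
    intro r _
    simp
  by_cases hzero : ∃ x ∈ Q.roots, x = W
  · obtain ⟨x, hx, rfl⟩ := hzero
    exact le_of_eq (hmem x hx)
  · by_cases hup : ∃ x ∈ Q.roots, W < x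
    · obtain ⟨x, hxT, hxW⟩ := hup
      have herase : ∀ y ∈ Q.roots.erase x, y < W := by
        intro y hy
        rcases lt_trichotomy y W with h | h | h
        · exact h
        · exact absurd ⟨y, Multiset.mem_of_mem_erase hy, h⟩ hzero
        · exfalso
          by_cases hxy : y = x
          · subst hxy
            have hc : 2 ≤ Q.roots.count y := by
              have h1 : 1 ≤ (Q.roots.erase y).count y := Multiset.one_le_count_iff_mem.2 hy
              have h2 : (Q.roots.erase y).count y = Q.roots.count y - 1 :=
                Multiset.count_erase_self _ _
              have h3 : 1 ≤ Q.roots.count y := Multiset.one_le_count_iff_mem.2 hxT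
              omega
            have := double_root_deriv_eval (sq_dvd_of_count hfac hc)
            exact (hdpos y h).ne' this
          · have hyT : y ∈ Q.roots := Multiset.mem_of_mem_erase hy
            rcases lt_or_gt_of_ne hxy with hlt | hlt
            · obtain ⟨t, ht, ht0⟩ := exists_deriv_root_between hlt (hmem y hyT) (hmem x hxT)
              exact (hdpos t (lt_trans h ht.1)).ne' ht0
            · obtain ⟨t, ht, ht0⟩ := exists_deriv_root_between hlt (hmem x hxT) (hmem y hyT)
              exact (hdpos t (lt_trans hxW ht.1)).ne' ht0
      have hsplit : Q.roots = x ::ₘ Q.roots.erase x := (Multiset.cons_erase hxT).symm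
      rw [hevalW, hsplit, Multiset.map_cons, Multiset.prod_cons]
      have hpos : 0 < ((Q.roots.erase x).map (fun r => W - r)).prod := by
        apply multiset_prod_pos
        intro z hz
        obtain ⟨y, hy, rfl⟩ := Multiset.mem_map.1 hz
        linarith [herase y hy]
      have : (W - x) * ((Q.roots.erase x).map (fun r => W - r)).prod < 0 :=
        mul_neg_of_neg_of_pos (by linarith) hpos
      nlinarith
    · -- all roots below W
      have hall : ∀ x ∈ Q.roots, x < W := by
        intro x hx
        rcases lt_trichotomy x W with h | h | h
        · exact h
        · exact absurd ⟨x, hx, h⟩ hzero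
        · exact absurd ⟨x, hx, h⟩ hup
      exfalso
      have hder2 : derivative Q = C Q.leadingCoeff *
          derivative ((Q.roots.map (fun r => X - C r)).prod) := by
        conv_lhs => rw [hfac]
        rw [derivative_mul, derivative_C]
        ring
      rw [derivative_prod] at hder2
      have hW0 := hWd0
      rw [hder2, eval_mul, eval_C] at hW0
      have hsum : Polynomial.eval W (Multiset.map (fun i =>
          (Multiset.map (fun r => X - C r) (Q.roots.erase i)).prod *
            derivative (X - C i)) Q.roots).sum =
          ((Q.roots.map (fun i =>
            ((Q.roots.erase i).map (fun r => W - r)).prod)).sum) := by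
        rw [show (Polynomial.eval W : ℝ[X] → ℝ) = (Polynomial.evalRingHom W : ℝ[X] → ℝ) from rfl,
          map_multiset_sum]
        rw [Multiset.map_map]
        congr 1
        apply Multiset.map_congr rfl
        intro i _
        simp only [Function.comp_apply, coe_evalRingHom, derivative_sub, derivative_X,
          derivative_C, sub_zero, mul_one, eval_multiset_prod, Multiset.map_map]
        congr 1
        apply Multiset.map_congr rfl
        intro r _
        simp
      rw [hsum] at hW0
      have hspos : 0 < ((Q.roots.map (fun i =>
          ((Q.roots.erase i).map (fun r => W - r)).prod)).sum) := by
        apply multiset_sum_pos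
        · intro z hz
          obtain ⟨i, hi, rfl⟩ := Multiset.mem_map.1 hz
          apply multiset_prod_pos
          intro u hu
          obtain ⟨r, hr, rfl⟩ := Multiset.mem_map.1 hu
          linarith [hall r (Multiset.mem_of_mem_erase hr)]
        · intro h0
          rw [Multiset.map_eq_zero] at h0
          rw [h0] at hcard
          simp at hcard
      nlinarith

lemma eval_ge_zero_of_min {Q : ℝ[X]} (hsp : Q.Splits)
    (hlc : 0 < Q.leadingCoeff) (hQ5 : Q.natDegree = 5)
    {v : Fin 4 → ℝ} (hder : derivative Q = ∏ j, (X - C (v j)))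
    {W : ℝ} (hW : ∀ j, W ≤ v j) (j₀ : Fin 4) (hj₀ : v j₀ = W) :
    0 ≤ Q.eval W := by
  classical
  have hfac := hsp.eq_prod_roots
  have hcard : Multiset.card Q.roots = 5 := by
    rw [splits_iff_card_roots.1 hsp, hQ5]
  have hmem : ∀ x ∈ Q.roots, Q.eval x = 0 := fun x hx => (mem_roots'.1 hx).2
  have hdpos : ∀ t, t < W → 0 < (derivative Q).eval t := by
    intro t ht
    rw [hder, eval_prod]
    have h0 : ∀ j : Fin 4, t - v j < 0 := fun j => by linarith [hW j]
    rw [Fin.prod_univ_four]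
    simp only [eval_sub, eval_X, eval_C]
    nlinarith [mul_pos_of_neg_of_neg (h0 0) (h0 1), mul_pos_of_neg_of_neg (h0 2) (h0 3),
      mul_pos (mul_pos_of_neg_of_neg (h0 0) (h0 1)) (mul_pos_of_neg_of_neg (h0 2) (h0 3))]
  have hWd0 : (derivative Q).eval W = 0 := by
    rw [hder, eval_prod]
    apply Finset.prod_eq_zero (Finset.mem_univ j₀)
    simp [hj₀]
  have hevalW : Q.eval W = Q.leadingCoeff * (Q.roots.map (fun r => W - r)).prod := by
    conv_lhs => rw [hfac]
    rw [eval_mul, eval_C, eval_multiset_prod, Multiset.map_map]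
    congr 2
    apply Multiset.map_congr rfl
    intro r _
    simp
  by_cases hzero : ∃ x ∈ Q.roots, x = W
  · obtain ⟨x, hx, rfl⟩ := hzero
    exact ge_of_eq (hmem x hx)
  · by_cases hup : ∃ x ∈ Q.roots, x < W
    · obtain ⟨x, hxT, hxW⟩ := hup
      have herase : ∀ y ∈ Q.roots.erase x, W < y := by
        intro y hy
        rcases lt_trichotomy y W with h | h | h
        · exfalso
          by_cases hxy : y = x
          · subst hxy
            have hc : 2 ≤ Q.roots.count y := by
              have h1 : 1 ≤ (Q.roots.erase y).count y := Multiset.one_le_count_iff_mem.2 hy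
              have h2 : (Q.roots.erase y).count y = Q.roots.count y - 1 :=
                Multiset.count_erase_self _ _
              have h3 : 1 ≤ Q.roots.count y := Multiset.one_le_count_iff_mem.2 hxT
              omega
            have := double_root_deriv_eval (sq_dvd_of_count hfac hc)
            exact (hdpos y h).ne' this
          · have hyT : y ∈ Q.roots := Multiset.mem_of_mem_erase hy
            rcases lt_or_gt_of_ne hxy with hlt | hlt
            · obtain ⟨t, ht, ht0⟩ := exists_deriv_root_between hlt (hmem y hyT) (hmem x hxT)
              exact (hdpos t (lt_trans ht.2 hxW)).ne' ht0
            · obtain ⟨t, ht, ht0⟩ := exists_deriv_root_between hlt (hmem x hxT) (hmem y hyT)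
              exact (hdpos t (lt_trans ht.2 h)).ne' ht0
        · exact absurd ⟨y, Multiset.mem_of_mem_erase hy, h⟩ hzero
        · exact h
      have hsplit : Q.roots = x ::ₘ Q.roots.erase x := (Multiset.cons_erase hxT).symm
      rw [hevalW, hsplit, Multiset.map_cons, Multiset.prod_cons]
      have hcarde : Multiset.card (Q.roots.erase x) = 4 := by
        rw [Multiset.card_erase_of_mem hxT, hcard]
        rfl
      have hpos : 0 < ((Q.roots.erase x).map (fun r => W - r)).prod := by
        apply multiset_prod_pos_of_neg
        · intro z hz
          obtain ⟨y, hy, rfl⟩ := Multiset.mem_map.1 hz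
          linarith [herase y hy]
        · rw [Multiset.card_map, hcarde]
          decide
      have : 0 < (W - x) * ((Q.roots.erase x).map (fun r => W - r)).prod :=
        mul_pos (by linarith) hpos
      nlinarith
    · -- all roots above W
      have hall : ∀ x ∈ Q.roots, W < x := by
        intro x hx
        rcases lt_trichotomy x W with h | h | h
        · exact absurd ⟨x, hx, h⟩ hup
        · exact absurd ⟨x, hx, h⟩ hzero
        · exact h
      exfalso
      have hder2 : derivative Q = C Q.leadingCoeff *
          derivative ((Q.roots.map (fun r => X - C r)).prod) := by
        conv_lhs => rw [hfac]
        rw [derivative_mul, derivative_C]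
        ring
      rw [derivative_prod] at hder2
      have hW0 := hWd0
      rw [hder2, eval_mul, eval_C] at hW0
      have hsum : Polynomial.eval W (Multiset.map (fun i =>
          (Multiset.map (fun r => X - C r) (Q.roots.erase i)).prod *
            derivative (X - C i)) Q.roots).sum =
          ((Q.roots.map (fun i =>
            ((Q.roots.erase i).map (fun r => W - r)).prod)).sum) := by
        rw [show (Polynomial.eval W : ℝ[X] → ℝ) = (Polynomial.evalRingHom W : ℝ[X] → ℝ) from rfl,
          map_multiset_sum]
        rw [Multiset.map_map]
        congr 1
        apply Multiset.map_congr rfl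
        intro i _
        simp only [Function.comp_apply, coe_evalRingHom, derivative_sub, derivative_X,
          derivative_C, sub_zero, mul_one, eval_multiset_prod, Multiset.map_map]
        congr 1
        apply Multiset.map_congr rfl
        intro r _
        simp
      rw [hsum] at hW0
      have hspos : 0 < ((Q.roots.map (fun i =>
          ((Q.roots.erase i).map (fun r => W - r)).prod)).sum) := by
        apply multiset_sum_pos
        · intro z hz
          obtain ⟨i, hi, rfl⟩ := Multiset.mem_map.1 hz
          apply multiset_prod_pos_of_neg
          · intro u hu
            obtain ⟨r, hr, rfl⟩ := Multiset.mem_map.1 hu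
            linarith [hall r (Multiset.mem_of_mem_erase hr)]
          · rw [Multiset.card_map, Multiset.card_erase_of_mem hi, hcard]
            decide
        · intro h0
          rw [Multiset.map_eq_zero] at h0
          rw [h0] at hcard
          simp at hcard
      nlinarith

lemma forward (w₁ w₂ w₃ w₄ : ℝ) (h12 : w₂ ≤ w₁) (h23 : w₃ ≤ w₂) (h34 : w₄ ≤ w₃)
    (p P : Polynomial ℝ)
    (hp : p = (X - C w₁) * (X - C w₂) * (X - C w₃) * (X - C w₄))
    (hP : derivative P = p) (c : ℝ) (hyp : Hyperbolic (P - C c)) :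
    P.eval w₁ ≤ P.eval w₄ := by
  set Q : ℝ[X] := P - C c with hQdef
  have hd : derivative Q = p := by
    rw [hQdef, derivative_sub, derivative_C, sub_zero, hP]
  have hpm : p.Monic := by
    rw [hp]
    exact (((monic_X_sub_C w₁).mul (monic_X_sub_C w₂)).mul (monic_X_sub_C w₃)).mul
      (monic_X_sub_C w₄)
  have hp4 : p.natDegree = 4 := by
    rw [hp]
    compute_degree!
  have hp0 : p ≠ 0 := hpm.ne_zero
  have hQ5 : Q.natDegree = 5 := natDegree_of_deriv hd hp4 hp0
  have hQ0 : Q ≠ 0 := fun h => by simp [h] at hQ5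
  have hsp : Q.Splits := splits_of_hyperbolic hQ0 hyp
  have hlc : 0 < Q.leadingCoeff := by
    rw [leadingCoeff_of_deriv hd hp4 hpm hQ5]
    norm_num
  set v : Fin 4 → ℝ := ![w₁, w₂, w₃, w₄] with hv
  have hder : derivative Q = ∏ j, (X - C (v j)) := by
    rw [hd, hp, Fin.prod_univ_four]
    simp [hv]
  have h1 : Q.eval w₁ ≤ 0 := by
    apply eval_le_zero_of_max hQ0 hsp hlc hQ5 hder (W := w₁) ?_ 0 (by simp [hv])
    intro j
    fin_cases j <;> simp [hv] <;> linarith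
  have h4 : 0 ≤ Q.eval w₄ := by
    apply eval_ge_zero_of_min hsp hlc hQ5 hder (W := w₄) ?_ 3 (by simp [hv])
    intro j
    fin_cases j <;> simp [hv] <;> linarith
  rw [hQdef] at h1 h4
  simp only [eval_sub, eval_C] at h1 h4
  linarith

lemma points_two {s : Multiset ℝ} {x₁ x₂ : ℝ} {n₁ n₂ : ℕ} (h12 : x₁ ≠ x₂)
    (h1 : n₁ ≤ s.count x₁) (h2 : n₂ ≤ s.count x₂) : n₁ + n₂ ≤ Multiset.card s := by
  have hle : Multiset.replicate n₁ x₁ + Multiset.replicate n₂ x₂ ≤ s := by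
    rw [Multiset.le_iff_count]
    intro a
    rw [Multiset.count_add, Multiset.count_replicate, Multiset.count_replicate]
    by_cases e1 : a = x₁
    · subst e1
      rw [if_pos rfl, if_neg (fun h => h12 h.symm), add_zero]
      exact h1
    · rw [if_neg (fun h => e1 h.symm), zero_add]
      by_cases e2 : a = x₂
      · subst e2; rw [if_pos rfl]; exact h2
      · rw [if_neg (fun h => e2 h.symm)]; exact Nat.zero_le _
  simpa using Multiset.card_le_card hle

lemma points_three {s : Multiset ℝ} {x₁ x₂ x₃ : ℝ} {n₁ n₂ n₃ : ℕ}
    (h12 : x₁ ≠ x₂) (h13 : x₁ ≠ x₃) (h23 : x₂ ≠ x₃)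
    (h1 : n₁ ≤ s.count x₁) (h2 : n₂ ≤ s.count x₂) (h3 : n₃ ≤ s.count x₃) :
    n₁ + n₂ + n₃ ≤ Multiset.card s := by
  have hle : Multiset.replicate n₁ x₁ + Multiset.replicate n₂ x₂ + Multiset.replicate n₃ x₃ ≤ s := by
    rw [Multiset.le_iff_count]
    intro a
    rw [Multiset.count_add, Multiset.count_add, Multiset.count_replicate,
      Multiset.count_replicate, Multiset.count_replicate]
    by_cases e1 : a = x₁
    · subst e1
      rw [if_pos rfl, if_neg (fun h => h12 h.symm), if_neg (fun h => h13 h.symm), add_zero, add_zero]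
      exact h1
    · rw [if_neg (fun h => e1 h.symm), zero_add]
      by_cases e2 : a = x₂
      · subst e2
        rw [if_pos rfl, if_neg (fun h => h23 h.symm), add_zero]
        exact h2
      · rw [if_neg (fun h => e2 h.symm), zero_add]
        by_cases e3 : a = x₃
        · subst e3; rw [if_pos rfl]; exact h3
        · rw [if_neg (fun h => e3 h.symm)]; exact Nat.zero_le _
  simpa using Multiset.card_le_card hle

lemma points_four {s : Multiset ℝ} {x₁ x₂ x₃ x₄ : ℝ} {n₁ n₂ n₃ n₄ : ℕ}
    (h12 : x₁ ≠ x₂) (h13 : x₁ ≠ x₃) (h14 : x₁ ≠ x₄) (h23 : x₂ ≠ x₃) (h24 : x₂ ≠ x₄)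
    (h34 : x₃ ≠ x₄)
    (h1 : n₁ ≤ s.count x₁) (h2 : n₂ ≤ s.count x₂) (h3 : n₃ ≤ s.count x₃)
    (h4 : n₄ ≤ s.count x₄) :
    n₁ + n₂ + n₃ + n₄ ≤ Multiset.card s := by
  have hle : Multiset.replicate n₁ x₁ + Multiset.replicate n₂ x₂ + Multiset.replicate n₃ x₃
      + Multiset.replicate n₄ x₄ ≤ s := by
    rw [Multiset.le_iff_count]
    intro a
    rw [Multiset.count_add, Multiset.count_add, Multiset.count_add, Multiset.count_replicate,
      Multiset.count_replicate, Multiset.count_replicate, Multiset.count_replicate]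
    by_cases e1 : a = x₁
    · subst e1
      rw [if_pos rfl, if_neg (fun h => h12 h.symm), if_neg (fun h => h13 h.symm), if_neg (fun h => h14 h.symm)]
      simpa using h1
    · rw [if_neg (fun h => e1 h.symm), zero_add]
      by_cases e2 : a = x₂
      · subst e2
        rw [if_pos rfl, if_neg (fun h => h23 h.symm), if_neg (fun h => h24 h.symm)]
        simpa using h2
      · rw [if_neg (fun h => e2 h.symm), zero_add]
        by_cases e3 : a = x₃
        · subst e3
          rw [if_pos rfl, if_neg (fun h => h34 h.symm)]
          simpa using h3
        · rw [if_neg (fun h => e3 h.symm), zero_add]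
          by_cases e4 : a = x₄
          · subst e4; rw [if_pos rfl]; exact h4
          · rw [if_neg (fun h => e4 h.symm)]; exact Nat.zero_le _
  simpa using Multiset.card_le_card hle

lemma backward (w₁ w₂ w₃ w₄ : ℝ) (h12 : w₂ ≤ w₁) (h23 : w₃ ≤ w₂) (h34 : w₄ ≤ w₃)
    (p P : Polynomial ℝ)
    (hp : p = (X - C w₁) * (X - C w₂) * (X - C w₃) * (X - C w₄))
    (hP : derivative P = p) (hle : P.eval w₁ ≤ P.eval w₄) :
    ∃ c : ℝ, Hyperbolic (P - C c) := by
  classical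
  set c : ℝ := max (P.eval w₁) (P.eval w₃) with hc
  set Q : ℝ[X] := P - C c with hQdef
  refine ⟨c, ?_⟩
  have hd : derivative Q = p := by rw [hQdef, derivative_sub, derivative_C, sub_zero, hP]
  have hpm : p.Monic := by
    rw [hp]
    exact (((monic_X_sub_C w₁).mul (monic_X_sub_C w₂)).mul (monic_X_sub_C w₃)).mul
      (monic_X_sub_C w₄)
  have hp4 : p.natDegree = 4 := by rw [hp]; compute_degree!
  have hp0 : p ≠ 0 := hpm.ne_zero
  have hd0 : derivative Q ≠ 0 := by rw [hd]; exact hp0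
  have hQ5 : Q.natDegree = 5 := natDegree_of_deriv hd hp4 hp0
  have hQ0 : Q ≠ 0 := fun h => by simp [h] at hQ5
  have hlc : 0 < Q.leadingCoeff := by rw [leadingCoeff_of_deriv hd hp4 hpm hQ5]; norm_num
  have hQdegpos : 0 < Q.degree := by
    rw [degree_eq_natDegree hQ0, hQ5]
    exact_mod_cast Nat.zero_lt_succ 4
  have hQval : ∀ x, Q.eval x = P.eval x - c := by intro x; rw [hQdef]; simp
  suffices h5 : 5 ≤ Multiset.card Q.roots by
    have hcard : Multiset.card Q.roots = 5 := le_antisymm (hQ5 ▸ Q.card_roots') h5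
    exact hyperbolic_of_splits (splits_iff_card_roots.2 (by rw [hcard, hQ5]))
  -- signs of the derivative on intervals
  have sgn_left : ∀ b', b' ≤ w₃ → ∀ x ∈ Set.Ioo w₄ b', (derivative Q).eval x < 0 := by
    intro b' hb' x hx
    rw [hd, hp]
    simp only [eval_mul, eval_sub, eval_X, eval_C]
    have a1 : x - w₁ < 0 := by have := hx.2; simp only [Set.mem_Ioo] at hx; linarith
    have a2 : x - w₂ < 0 := by have := hx.2; linarith
    have a3 : x - w₃ < 0 := by have := hx.2; linarith
    have a4 : 0 < x - w₄ := by have := hx.1; linarith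
    exact mul_neg_of_neg_of_pos (mul_neg_of_pos_of_neg (mul_pos_of_neg_of_neg a1 a2) a3) a4
  have sgn_mid : ∀ x ∈ Set.Ioo w₃ w₂, 0 < (derivative Q).eval x := by
    intro x hx
    rw [hd, hp]
    simp only [eval_mul, eval_sub, eval_X, eval_C]
    have a1 : x - w₁ < 0 := by have := hx.2; linarith
    have a2 : x - w₂ < 0 := by have := hx.2; linarith
    have a3 : 0 < x - w₃ := by have := hx.1; linarith
    have a4 : 0 < x - w₄ := by have := hx.1; linarith
    exact mul_pos (mul_pos (mul_pos_of_neg_of_neg a1 a2) a3) a4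
  have sgn_right : ∀ x ∈ Set.Ioo w₂ w₁, (derivative Q).eval x < 0 := by
    intro x hx
    rw [hd, hp]
    simp only [eval_mul, eval_sub, eval_X, eval_C]
    have a1 : x - w₁ < 0 := by have := hx.2; linarith
    have a2 : 0 < x - w₂ := by have := hx.1; linarith
    have a3 : 0 < x - w₃ := by have := hx.1; linarith
    have a4 : 0 < x - w₄ := by have := hx.1; linarith
    exact mul_neg_of_neg_of_pos (mul_neg_of_neg_of_pos (mul_neg_of_neg_of_pos a1 a2) a3) a4
  -- basic value facts
  have hcA : P.eval w₁ ≤ c := le_max_left _ _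
  have hcB : P.eval w₃ ≤ c := le_max_right _ _
  have hQ1 : Q.eval w₁ ≤ 0 := by rw [hQval]; linarith
  have hQ3 : Q.eval w₃ ≤ 0 := by rw [hQval]; linarith
  have hQ34 : Q.eval w₃ ≤ Q.eval w₄ := by
    have hmono := antitoneOn_Icc (Q := Q) (a := w₄) (b := w₃)
      (fun x hx => (sgn_left w₃ le_rfl x hx).le)
    exact hmono (Set.left_mem_Icc.2 h34) (Set.right_mem_Icc.2 h34) h34
  have hQ32 : Q.eval w₃ ≤ Q.eval w₂ := by
    have hmono := monotoneOn_Icc (Q := Q) (a := w₃) (b := w₂)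
      (fun x hx => (sgn_mid x hx).le)
    exact hmono (Set.left_mem_Icc.2 h23) (Set.right_mem_Icc.2 h23) h23
  have hQ12 : Q.eval w₁ ≤ Q.eval w₂ := by
    have hmono := antitoneOn_Icc (Q := Q) (a := w₂) (b := w₁)
      (fun x hx => (sgn_right x hx).le)
    exact hmono (Set.left_mem_Icc.2 h12) (Set.right_mem_Icc.2 h12) h12
  have hQ4 : 0 ≤ Q.eval w₄ := by
    have hB4 : P.eval w₃ ≤ P.eval w₄ := by
      have h' := hQ34
      rw [hQval, hQval] at h'
      linarith
    rw [hQval]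
    have : c ≤ P.eval w₄ := max_le hle hB4
    linarith
  have hQ2 : 0 ≤ Q.eval w₂ := by
    have hA2 : P.eval w₁ ≤ P.eval w₂ := by
      have h' := hQ12; rw [hQval, hQval] at h'; linarith
    have hB2 : P.eval w₃ ≤ P.eval w₂ := by
      have h' := hQ32; rw [hQval, hQval] at h'; linarith
    rw [hQval]
    have : c ≤ P.eval w₂ := max_le hA2 hB2
    linarith
  -- far roots
  have below : 0 < Q.eval w₄ → ∃ t, t < w₄ ∧ Q.eval t = 0 := by
    intro h4
    obtain ⟨z, hz1, hz2⟩ := exists_eval_neg_lt hQ5 hlc w₄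
    obtain ⟨t, htm, ht0⟩ := exists_root_Icc hz1.le hz2.le h4.le
    refine ⟨t, ?_, ht0⟩
    rcases lt_or_eq_of_le htm.2 with h | h
    · exact h
    · exfalso; rw [h] at ht0; linarith
  have above : Q.eval w₁ < 0 → ∃ t, w₁ < t ∧ Q.eval t = 0 := by
    intro h1
    obtain ⟨z, hz1, hz2⟩ := exists_eval_pos_gt hQdegpos hlc w₁
    obtain ⟨t, htm, ht0⟩ := exists_root_Icc hz1.le h1.le hz2.le
    refine ⟨t, ?_, ht0⟩
    rcases lt_or_eq_of_le htm.1 with h | h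
    · exact h
    · exfalso; rw [← h] at ht0; linarith
  rcases le_or_gt (P.eval w₃) (P.eval w₁) with hBA | hAB
  · -- Case I : c = P(w₁)
    have hc_eq : c = P.eval w₁ := by rw [hc]; exact max_eq_left hBA
    have hQ1z : Q.eval w₁ = 0 := by rw [hQval, hc_eq]; ring
    by_cases e21 : w₂ = w₁
    · by_cases e32 : w₃ = w₂
      · by_cases e43 : w₄ = w₃
        · -- all equal
          have hdvd : (X - C w₁) ^ 4 ∣ derivative Q := ⟨1, by rw [hd, hp, e43, e32, e21]; ring⟩
          have hct := count_ge_of_critical hQ0 hd0 hQ1z hdvd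
          have h' := Multiset.count_le_card w₁ Q.roots
          omega
        · -- w₄ < w₃ = w₂ = w₁
          have hw43 : w₄ < w₃ := lt_of_le_of_ne h34 e43
          have hQ31 : Q.eval w₃ = 0 := by rw [e32, e21]; exact hQ1z
          have hQ4pos : 0 < Q.eval w₄ := by
            have hsa := strictAntiOn_Icc (Q := Q) (a := w₄) (b := w₃) (sgn_left w₃ le_rfl)
            have h' : Q.eval w₃ < Q.eval w₄ :=
              hsa (Set.left_mem_Icc.2 h34) (Set.right_mem_Icc.2 h34) hw43
            linarith
          obtain ⟨t, ht4, ht0⟩ := below hQ4pos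
          have hdvd : (X - C w₁) ^ 3 ∣ derivative Q :=
            ⟨X - C w₄, by rw [hd, hp, e32, e21]; ring⟩
          have hct := count_ge_of_critical hQ0 hd0 hQ1z hdvd
          have hc1 := count_ge_one hQ0 ht0
          have htot := points_two (s := Q.roots) (x₁ := t) (x₂ := w₁)
            (ne_of_lt (by linarith)) hc1 hct
          omega
      · -- w₃ < w₂ = w₁
        have hw32 : w₃ < w₂ := lt_of_le_of_ne h23 e32
        have hdvd1 : (X - C w₁) ^ 2 ∣ derivative Q :=
          ⟨(X - C w₃) * (X - C w₄), by rw [hd, hp, e21]; ring⟩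
        have hct1 := count_ge_of_critical hQ0 hd0 hQ1z hdvd1
        by_cases e43 : w₄ = w₃
        · have hQ3z : Q.eval w₃ = 0 := by
            have h' : Q.eval w₄ = Q.eval w₃ := by rw [e43]
            linarith
          have hdvd3 : (X - C w₃) ^ 1 ∣ derivative Q :=
            ⟨(X - C w₁) * (X - C w₂) * (X - C w₄), by rw [hd, hp, pow_one]; ring⟩
          have hct3 := count_ge_of_critical hQ0 hd0 hQ3z hdvd3
          have htot := points_two (s := Q.roots) (x₁ := w₃) (x₂ := w₁)
            (ne_of_lt (by linarith)) hct3 hct1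
          omega
        · have hw43 : w₄ < w₃ := lt_of_le_of_ne h34 e43
          by_cases hQ3z : Q.eval w₃ = 0
          · have hdvd3 : (X - C w₃) ^ 1 ∣ derivative Q :=
              ⟨(X - C w₁) * (X - C w₂) * (X - C w₄), by rw [hd, hp, pow_one]; ring⟩
            have hct3 := count_ge_of_critical hQ0 hd0 hQ3z hdvd3
            have hQ4pos : 0 < Q.eval w₄ := by
              have hsa := strictAntiOn_Icc (Q := Q) (a := w₄) (b := w₃) (sgn_left w₃ le_rfl)
              have h' : Q.eval w₃ < Q.eval w₄ :=
                hsa (Set.left_mem_Icc.2 h34) (Set.right_mem_Icc.2 h34) hw43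
              linarith
            obtain ⟨t, ht4, ht0⟩ := below hQ4pos
            have hc1 := count_ge_one hQ0 ht0
            have htot := points_three (s := Q.roots) (x₁ := t) (x₂ := w₃) (x₃ := w₁)
              (ne_of_lt (by linarith)) (ne_of_lt (by linarith)) (ne_of_lt (by linarith))
              hc1 hct3 hct1
            omega
          · have hQ3neg : Q.eval w₃ < 0 := lt_of_le_of_ne hQ3 hQ3z
            by_cases hQ4z : Q.eval w₄ = 0
            · have hdvd4 : (X - C w₄) ^ 1 ∣ derivative Q :=
                ⟨(X - C w₁) * (X - C w₂) * (X - C w₃), by rw [hd, hp, pow_one]; ring⟩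
              have hct4 := count_ge_of_critical hQ0 hd0 hQ4z hdvd4
              have htot := points_two (s := Q.roots) (x₁ := w₄) (x₂ := w₁)
                (ne_of_lt (by linarith)) hct4 hct1
              omega
            · have hQ4pos : 0 < Q.eval w₄ := lt_of_le_of_ne hQ4 (Ne.symm hQ4z)
              obtain ⟨t, ht4, ht0⟩ := below hQ4pos
              obtain ⟨u, hum, hu0⟩ := exists_root_Icc' h34 hQ4pos.le hQ3neg.le
              have hu4 : w₄ < u := by
                rcases lt_or_eq_of_le hum.1 with h | h
                · exact h
                · exfalso; rw [← h] at hu0; linarith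
              have hu3 : u < w₃ := by
                rcases lt_or_eq_of_le hum.2 with h | h
                · exact h
                · exfalso; rw [h] at hu0; linarith
              have hc1 := count_ge_one hQ0 ht0
              have hcu := count_ge_one hQ0 hu0
              have htot := points_three (s := Q.roots) (x₁ := t) (x₂ := u) (x₃ := w₁)
                (ne_of_lt (by linarith)) (ne_of_lt (by linarith)) (ne_of_lt (by linarith))
                hc1 hcu hct1
              omega
    · -- w₂ < w₁
      have hw21 : w₂ < w₁ := lt_of_le_of_ne h12 e21
      have hdvd1 : (X - C w₁) ^ 1 ∣ derivative Q :=
        ⟨(X - C w₂) * (X - C w₃) * (X - C w₄), by rw [hd, hp, pow_one]; ring⟩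
      have hct1 := count_ge_of_critical hQ0 hd0 hQ1z hdvd1
      have hQ2pos : 0 < Q.eval w₂ := by
        have hsa := strictAntiOn_Icc (Q := Q) (a := w₂) (b := w₁) sgn_right
        have h' : Q.eval w₁ < Q.eval w₂ :=
          hsa (Set.left_mem_Icc.2 h12) (Set.right_mem_Icc.2 h12) hw21
        linarith
      by_cases e32 : w₃ = w₂
      · exfalso; rw [e32] at hQ3; linarith
      · have hw32 : w₃ < w₂ := lt_of_le_of_ne h23 e32
        by_cases hQ3z : Q.eval w₃ = 0
        · by_cases e43 : w₄ = w₃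
          · have hdvd3 : (X - C w₃) ^ 2 ∣ derivative Q :=
              ⟨(X - C w₁) * (X - C w₂), by rw [hd, hp, e43]; ring⟩
            have hct3 := count_ge_of_critical hQ0 hd0 hQ3z hdvd3
            have htot := points_two (s := Q.roots) (x₁ := w₃) (x₂ := w₁)
              (ne_of_lt (by linarith)) hct3 hct1
            omega
          · have hw43 : w₄ < w₃ := lt_of_le_of_ne h34 e43
            have hdvd3 : (X - C w₃) ^ 1 ∣ derivative Q :=
              ⟨(X - C w₁) * (X - C w₂) * (X - C w₄), by rw [hd, hp, pow_one]; ring⟩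
            have hct3 := count_ge_of_critical hQ0 hd0 hQ3z hdvd3
            have hQ4pos : 0 < Q.eval w₄ := by
              have hsa := strictAntiOn_Icc (Q := Q) (a := w₄) (b := w₃) (sgn_left w₃ le_rfl)
              have h' : Q.eval w₃ < Q.eval w₄ :=
                hsa (Set.left_mem_Icc.2 h34) (Set.right_mem_Icc.2 h34) hw43
              linarith
            obtain ⟨t, ht4, ht0⟩ := below hQ4pos
            have hc1 := count_ge_one hQ0 ht0
            have htot := points_three (s := Q.roots) (x₁ := t) (x₂ := w₃) (x₃ := w₁)
              (ne_of_lt (by linarith)) (ne_of_lt (by linarith)) (ne_of_lt (by linarith))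
              hc1 hct3 hct1
            omega
        · have hQ3neg : Q.eval w₃ < 0 := lt_of_le_of_ne hQ3 hQ3z
          obtain ⟨s, hsm, hs0⟩ := exists_root_Icc hw32.le hQ3neg.le hQ2pos.le
          have hs3 : w₃ < s := by
            rcases lt_or_eq_of_le hsm.1 with h | h
            · exact h
            · exfalso; rw [← h] at hs0; linarith
          have hs2 : s < w₂ := by
            rcases lt_or_eq_of_le hsm.2 with h | h
            · exact h
            · exfalso; rw [h] at hs0; linarith
          have hcs := count_ge_one hQ0 hs0
          by_cases e43 : w₄ = w₃
          · exfalso; rw [e43] at hQ4; linarith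
          · have hw43 : w₄ < w₃ := lt_of_le_of_ne h34 e43
            by_cases hQ4z : Q.eval w₄ = 0
            · have hdvd4 : (X - C w₄) ^ 1 ∣ derivative Q :=
                ⟨(X - C w₁) * (X - C w₂) * (X - C w₃), by rw [hd, hp, pow_one]; ring⟩
              have hct4 := count_ge_of_critical hQ0 hd0 hQ4z hdvd4
              have htot := points_three (s := Q.roots) (x₁ := w₄) (x₂ := s) (x₃ := w₁)
                (ne_of_lt (by linarith)) (ne_of_lt (by linarith)) (ne_of_lt (by linarith))
                hct4 hcs hct1
              omega
            · have hQ4pos : 0 < Q.eval w₄ := lt_of_le_of_ne hQ4 (Ne.symm hQ4z)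
              obtain ⟨t, ht4, ht0⟩ := below hQ4pos
              obtain ⟨u, hum, hu0⟩ := exists_root_Icc' hw43.le hQ4pos.le hQ3neg.le
              have hu4 : w₄ < u := by
                rcases lt_or_eq_of_le hum.1 with h | h
                · exact h
                · exfalso; rw [← h] at hu0; linarith
              have hu3 : u < w₃ := by
                rcases lt_or_eq_of_le hum.2 with h | h
                · exact h
                · exfalso; rw [h] at hu0; linarith
              have hc1 := count_ge_one hQ0 ht0
              have hcu := count_ge_one hQ0 hu0
              have htot := points_four (s := Q.roots) (x₁ := t) (x₂ := u) (x₃ := s) (x₄ := w₁)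
                (ne_of_lt (by linarith)) (ne_of_lt (by linarith)) (ne_of_lt (by linarith))
                (ne_of_lt (by linarith)) (ne_of_lt (by linarith)) (ne_of_lt (by linarith))
                hc1 hcu hcs hct1
              omega
  · -- Case II : c = P(w₃)
    have hc_eq : c = P.eval w₃ := by rw [hc]; exact max_eq_right hAB.le
    have hQ3z : Q.eval w₃ = 0 := by rw [hQval, hc_eq]; ring
    have hQ1neg : Q.eval w₁ < 0 := by rw [hQval, hc_eq]; linarith
    obtain ⟨t, ht1, ht0⟩ := above hQ1neg
    have hct := count_ge_one hQ0 ht0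
    by_cases e32 : w₃ = w₂
    · by_cases e21 : w₂ = w₁
      · exfalso
        have h31 : w₃ = w₁ := e32.trans e21
        rw [h31] at hAB
        exact lt_irrefl _ hAB
      · have hw21 : w₂ < w₁ := lt_of_le_of_ne h12 e21
        by_cases e43 : w₄ = w₃
        · have hdvd3 : (X - C w₃) ^ 3 ∣ derivative Q :=
            ⟨X - C w₁, by rw [hd, hp, e43, ← e32]; ring⟩
          have hct3 := count_ge_of_critical hQ0 hd0 hQ3z hdvd3
          have htot := points_two (s := Q.roots) (x₁ := w₃) (x₂ := t)
            (ne_of_lt (by linarith)) hct3 hct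
          omega
        · have hw43 : w₄ < w₃ := lt_of_le_of_ne h34 e43
          have hdvd3 : (X - C w₃) ^ 2 ∣ derivative Q :=
            ⟨(X - C w₁) * (X - C w₄), by rw [hd, hp, ← e32]; ring⟩
          have hct3 := count_ge_of_critical hQ0 hd0 hQ3z hdvd3
          have hQ4pos : 0 < Q.eval w₄ := by
            have hsa := strictAntiOn_Icc (Q := Q) (a := w₄) (b := w₃) (sgn_left w₃ le_rfl)
            have h' : Q.eval w₃ < Q.eval w₄ :=
              hsa (Set.left_mem_Icc.2 h34) (Set.right_mem_Icc.2 h34) hw43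
            linarith
          obtain ⟨u, hu4, hu0⟩ := below hQ4pos
          have hcu := count_ge_one hQ0 hu0
          have htot := points_three (s := Q.roots) (x₁ := u) (x₂ := w₃) (x₃ := t)
            (ne_of_lt (by linarith)) (ne_of_lt (by linarith)) (ne_of_lt (by linarith))
            hcu hct3 hct
          omega
    · have hw32 : w₃ < w₂ := lt_of_le_of_ne h23 e32
      by_cases e21 : w₂ = w₁
      · exfalso
        have sgn_sq : ∀ x ∈ Set.Ioo w₃ w₁, 0 ≤ (derivative Q).eval x := by
          intro x hx
          rw [hd, hp, e21]
          simp only [eval_mul, eval_sub, eval_X, eval_C]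
          have a3 : 0 < x - w₃ := by have := hx.1; linarith
          have a4 : 0 < x - w₄ := by have := hx.1; linarith
          have hsq : 0 ≤ (x - w₁) * (x - w₁) := mul_self_nonneg _
          exact mul_nonneg (mul_nonneg hsq a3.le) a4.le
        have hw31 : w₃ ≤ w₁ := by linarith
        have hmono := monotoneOn_Icc (Q := Q) (a := w₃) (b := w₁) sgn_sq
        have h' : Q.eval w₃ ≤ Q.eval w₁ :=
          hmono (Set.left_mem_Icc.2 hw31) (Set.right_mem_Icc.2 hw31) hw31
        rw [hQval, hQval, hc_eq] at h'
        linarith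
      · have hw21 : w₂ < w₁ := lt_of_le_of_ne h12 e21
        have hQ2pos : 0 < Q.eval w₂ := by
          have hsm := strictMonoOn_Icc (Q := Q) (a := w₃) (b := w₂) sgn_mid
          have h' : Q.eval w₃ < Q.eval w₂ :=
            hsm (Set.left_mem_Icc.2 h23) (Set.right_mem_Icc.2 h23) hw32
          linarith
        obtain ⟨s, hsm', hs0⟩ := exists_root_Icc' h12 hQ2pos.le hQ1neg.le
        have hs2 : w₂ < s := by
          rcases lt_or_eq_of_le hsm'.1 with h | h
          · exact h
          · exfalso; rw [← h] at hs0; linarith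
        have hs1 : s < w₁ := by
          rcases lt_or_eq_of_le hsm'.2 with h | h
          · exact h
          · exfalso; rw [h] at hs0; linarith
        have hcs := count_ge_one hQ0 hs0
        by_cases e43 : w₄ = w₃
        · have hdvd3 : (X - C w₃) ^ 2 ∣ derivative Q :=
            ⟨(X - C w₁) * (X - C w₂), by rw [hd, hp, e43]; ring⟩
          have hct3 := count_ge_of_critical hQ0 hd0 hQ3z hdvd3
          have htot := points_three (s := Q.roots) (x₁ := w₃) (x₂ := s) (x₃ := t)
            (ne_of_lt (by linarith)) (ne_of_lt (by linarith)) (ne_of_lt (by linarith))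
            hct3 hcs hct
          omega
        · have hw43 : w₄ < w₃ := lt_of_le_of_ne h34 e43
          have hdvd3 : (X - C w₃) ^ 1 ∣ derivative Q :=
            ⟨(X - C w₁) * (X - C w₂) * (X - C w₄), by rw [hd, hp, pow_one]; ring⟩
          have hct3 := count_ge_of_critical hQ0 hd0 hQ3z hdvd3
          have hQ4pos : 0 < Q.eval w₄ := by
            have hsa := strictAntiOn_Icc (Q := Q) (a := w₄) (b := w₃) (sgn_left w₃ le_rfl)
            have h' : Q.eval w₃ < Q.eval w₄ :=
              hsa (Set.left_mem_Icc.2 h34) (Set.right_mem_Icc.2 h34) hw43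
            linarith
          obtain ⟨u, hu4, hu0⟩ := below hQ4pos
          have hcu := count_ge_one hQ0 hu0
          have htot := points_four (s := Q.roots) (x₁ := u) (x₂ := w₃) (x₃ := s) (x₄ := t)
            (ne_of_lt (by linarith)) (ne_of_lt (by linarith)) (ne_of_lt (by linarith))
            (ne_of_lt (by linarith)) (ne_of_lt (by linarith)) (ne_of_lt (by linarith))
            hcu hct3 hcs hct
          omega
end Hyp


theorem stmt_4 (w₁ w₂ w₃ w₄ : ℝ) (h12 : w₂ ≤ w₁) (h23 : w₃ ≤ w₂) (h34 : w₄ ≤ w₃)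
    (p P : Polynomial ℝ)
    (hp : p = (X - C w₁) * (X - C w₂) * (X - C w₃) * (X - C w₄))
    (hP : derivative P = p) :
    (∃ c : ℝ, Hyperbolic (P - C c)) ↔ P.eval w₁ ≤ P.eval w₄ := by
  constructor
  · rintro ⟨c, hc⟩
    exact Hyp.forward w₁ w₂ w₃ w₄ h12 h23 h34 p P hp hP c hc
  · intro hle
    exact Hyp.backward w₁ w₂ w₃ w₄ h12 h23 h34 p P hp hP hle
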